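/- (Jensen's theorem for quaternions) Let g ∈ ℝ[X] with deg g ≥ 1 and let f = g.map φ ∈ ℍ[X], where φ : ℝ → ℍ is the canonical algebra map. If λ ∈ ℍ \ ℝ satisfies f′(λ) = 0, then there exists z ∈ ℍ with f(z) = 0 and im z ≠ 0 such that ‖λ − φ(re z)‖ ≤ ‖im z‖; i.e., λ lies on or within the Jensen sphere of the non-real root z, the sphere in ℍ with center re(z) and radius ‖im z‖. -/

import Mathlib

open Polynomial


private lemma eval_derivative_multiset_prod (R : Multiset ℂ) (w : ℂ)
    (hw : ∀ r ∈ R, w ≠ r) :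
    ((R.map fun r => X - C r).prod.derivative).eval w
      = ((R.map fun r => X - C r).prod).eval w * (R.map fun r => (w - r)⁻¹).sum := by
  induction R using Multiset.induction with
  | empty => simp
  | cons r R ih =>
    have hwr : w - r ≠ 0 := sub_ne_zero.2 (hw r (Multiset.mem_cons_self r R))
    have hw' : ∀ s ∈ R, w ≠ s := fun s hs => hw s (Multiset.mem_cons_of_mem hs)
    simp only [Multiset.map_cons, Multiset.prod_cons, Multiset.sum_cons,
      derivative_mul, derivative_sub, derivative_X, derivative_C, sub_zero, one_mul,
      eval_add, eval_mul, eval_sub, eval_X, eval_C, ih hw']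
    field_simp

private lemma im_multiset_sum (s : Multiset ℂ) : s.sum.im = (s.map Complex.im).sum := by
  simpa using map_multiset_sum Complex.imAddGroupHom s

private lemma complex_jensen (g : Polynomial ℝ) (hg : 1 ≤ g.natDegree) (w : ℂ)
    (hb : 0 < w.im)
    (hcrit : ((g.map (algebraMap ℝ ℂ)).derivative).eval w = 0) :
    ∃ r : ℂ, (g.map (algebraMap ℝ ℂ)).eval r = 0 ∧ r.im ≠ 0 ∧
      ‖w - (r.re : ℂ)‖ ≤ |r.im| := by
  by_contra hcon
  push_neg at hcon
  set G : Polynomial ℂ := g.map (algebraMap ℝ ℂ) with hG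
  have hg0 : g ≠ 0 := fun h => by simp [h] at hg
  have hG0 : G ≠ 0 := by
    simpa [hG, Polynomial.map_eq_zero] using hg0
  have hGw : G.eval w ≠ 0 := by
    intro h
    have h2 := hcon w h (ne_of_gt hb)
    have h3 : w - (w.re : ℂ) = (w.im : ℂ) * Complex.I := by
      apply Complex.ext <;> simp
    rw [h3] at h2
    simp [map_mul] at h2
  have hsplits : G.Splits := IsAlgClosed.splits G
  set R := G.roots with hR
  have hcard : R.card = g.natDegree := by
    rw [hR, (splits_iff_card_roots).1 hsplits, hG]
    exact natDegree_map _
  have hRne : R ≠ 0 := by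
    intro h
    rw [h] at hcard
    simp at hcard
    omega
  have hwR : ∀ r ∈ R, w ≠ r := by
    intro r hr h
    exact hGw (h ▸ (mem_roots'.1 hr).2)
  have hmapG : G.map (starRingEnd ℂ) = G := by
    rw [hG, Polynomial.map_map]
    congr 1
    exact RingHom.ext fun x => by simp [Complex.conj_ofReal]
  have hconj : R.map (starRingEnd ℂ) = R := by
    have h := hsplits.roots_map (starRingEnd ℂ)
    rw [hmapG] at h
    exact h.symm
  have hGfac : G = C G.leadingCoeff * (R.map fun r => X - C r).prod := hsplits.eq_prod_roots
  have hS : (R.map fun r => (w - r)⁻¹).sum = 0 := by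
    have hd := eval_derivative_multiset_prod R w hwR
    have h1 : G.eval w = G.leadingCoeff * ((R.map fun r => X - C r).prod).eval w := by
      conv_lhs => rw [hGfac]
      simp [eval_mul]
    have h2 : (G.derivative).eval w
        = G.leadingCoeff * (((R.map fun r => X - C r).prod).derivative).eval w := by
      conv_lhs => rw [hGfac, derivative_C_mul]
      simp [eval_mul]
    have h3 : G.eval w * (R.map fun r => (w - r)⁻¹).sum = 0 := by
      rw [h1, mul_assoc, ← hd, ← h2, hcrit]
    rcases mul_eq_zero.1 h3 with h | h
    · exact absurd h hGw
    · exact h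
  set T := (R.map fun r => ((w - r)⁻¹).im).sum with hT
  have hT0 : T = 0 := by
    have h := congrArg Complex.im hS
    rw [im_multiset_sum, Multiset.map_map] at h
    simpa only [Function.comp, Complex.zero_im] using h
  have hTconj : (R.map fun r => ((w - (starRingEnd ℂ) r)⁻¹).im).sum = T := by
    conv_rhs => rw [hT, ← hconj, Multiset.map_map]
    rfl
  have hneg : ∀ r ∈ R, ((w - r)⁻¹).im + ((w - (starRingEnd ℂ) r)⁻¹).im < 0 := by
    intro r hr
    have hrroot : G.eval r = 0 := (mem_roots'.1 hr).2
    have hrc : (starRingEnd ℂ) r ∈ R := by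
      rw [← hconj]; exact Multiset.mem_map_of_mem _ hr
    have h1 : w ≠ r := hwR r hr
    have h2 : w ≠ (starRingEnd ℂ) r := hwR _ hrc
    have key : r.im ^ 2 < (w.re - r.re) ^ 2 + w.im ^ 2 := by
      by_cases hy : r.im = 0
      · rw [hy]
        nlinarith [hb, sq_nonneg (w.re - r.re)]
      · have h4 := hcon r hrroot hy
        have h5 : ‖w - (r.re : ℂ)‖ ^ 2 = (w.re - r.re) ^ 2 + w.im ^ 2 := by
          rw [Complex.sq_norm, Complex.normSq_apply]
          simp [Complex.sub_re, Complex.sub_im]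
          try ring
        nlinarith [abs_nonneg r.im, norm_nonneg (w - (r.re : ℂ)), sq_abs r.im]
    have e1 : (w - r).im = w.im - r.im := by simp
    have e2 : (w - (starRingEnd ℂ) r).im = w.im + r.im := by
      simp [Complex.sub_im, Complex.conj_im]
      try ring
    have e3 : Complex.normSq (w - r) = (w.re - r.re) ^ 2 + (w.im - r.im) ^ 2 := by
      rw [Complex.normSq_apply]
      simp [Complex.sub_re, Complex.sub_im]
      try ring
    have e4 : Complex.normSq (w - (starRingEnd ℂ) r)
        = (w.re - r.re) ^ 2 + (w.im + r.im) ^ 2 := by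
      rw [Complex.normSq_apply]
      simp [Complex.sub_re, Complex.sub_im, Complex.conj_re, Complex.conj_im]
      try ring
    have hN1 : 0 < (w.re - r.re) ^ 2 + (w.im - r.im) ^ 2 := by
      rw [← e3]; exact Complex.normSq_pos.2 (sub_ne_zero.2 h1)
    have hN2 : 0 < (w.re - r.re) ^ 2 + (w.im + r.im) ^ 2 := by
      rw [← e4]; exact Complex.normSq_pos.2 (sub_ne_zero.2 h2)
    rw [Complex.inv_im, Complex.inv_im, e1, e2, e3, e4]
    rw [div_add_div _ _ hN1.ne' hN2.ne']
    apply div_neg_of_neg_of_pos _ (mul_pos hN1 hN2)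
    nlinarith [key, hb, sq_nonneg (w.re - r.re)]
  have hsumneg : (R.map fun r => (((w - r)⁻¹).im + ((w - (starRingEnd ℂ) r)⁻¹).im)).sum
      < (R.map fun _ => (0 : ℝ)).sum :=
    Multiset.sum_lt_sum_of_nonempty hRne hneg
  rw [Multiset.sum_map_add] at hsumneg
  rw [hTconj, ← hT] at hsumneg
  rw [hT0] at hsumneg
  simp [Multiset.map_const'] at hsumneg

/- Theorem 5.2, Jensen's theorem (specialized to ℍ): if `f ∈ ℍ[X]` has real
coefficients (`f = g.map φ`, `deg g ≥ 1`) and `λ ∈ ℍ \ ℝ` is a critical point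
of `f`, then `λ` lies on or within the Jensen sphere of some non-real root `z`
of `f`, i.e. the sphere with center `re z` and radius `‖im z‖`. -/
theorem jensen_theorem_quaternions
    (g : Polynomial ℝ) (hg : 1 ≤ g.natDegree)
    (f : Polynomial (Quaternion ℝ))
    (hf : f = g.map (algebraMap ℝ (Quaternion ℝ)))
    (lam : Quaternion ℝ)
    (hlam : lam ∉ Set.range (algebraMap ℝ (Quaternion ℝ)))
    (hcrit : Polynomial.eval lam (derivative f) = 0) :
    ∃ z : Quaternion ℝ, Polynomial.eval z f = 0 ∧ z.im ≠ 0 ∧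
      ‖lam - ((z.re : ℝ) : Quaternion ℝ)‖ ≤ ‖z.im‖ := by
  have him : lam.im ≠ 0 := by
    intro h
    apply hlam
    refine ⟨lam.re, ?_⟩
    have h2 := lam.re_add_im
    rw [h] at h2
    simpa [Quaternion.algebraMap_def] using h2
  set b : ℝ := ‖lam.im‖ with hbdef
  have hb : 0 < b := norm_pos_iff.2 him
  set u : Quaternion ℝ := b⁻¹ • lam.im with hudef
  have hqq : lam.im * lam.im = -(((b * b : ℝ)) : Quaternion ℝ) := by
    have hst : star lam.im = -lam.im := by
      ext <;> simp
    have h1 : lam.im * lam.im = -(lam.im * star lam.im) := by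
      rw [hst, mul_neg, neg_neg]
    rw [h1, Quaternion.self_mul_star, Quaternion.normSq_eq_norm_mul_self]
  have hu : u * u = -1 := by
    rw [hudef, smul_mul_smul_comm, hqq, smul_neg, Quaternion.smul_coe]
    rw [show b⁻¹ * b⁻¹ * (b * b) = 1 by field_simp]
    simp
  have hunorm : ‖u‖ = 1 := by
    rw [hudef, norm_smul, norm_inv, Real.norm_eq_abs, abs_of_pos hb, ← hbdef]
    field_simp
  have hune : u ≠ 0 := by
    intro h
    rw [h] at hunorm
    simp at hunorm
  set ψ : ℂ →ₐ[ℝ] Quaternion ℝ := Complex.liftAux u hu with hψdef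
  have hψre : ∀ c : ℂ, (ψ c).re = c.re := by
    intro c
    rw [hψdef, Complex.liftAux_apply]
    simp [Quaternion.algebraMap_def, hudef]
  have hψim : ∀ c : ℂ, (ψ c).im = c.im • u := by
    intro c
    rw [hψdef, Complex.liftAux_apply]
    simp [Quaternion.algebraMap_def]
    ext <;> simp [hudef]
  have hnormsq : ∀ q : Quaternion ℝ, ‖q‖ * ‖q‖ = q.re * q.re + ‖q.im‖ * ‖q.im‖ := by
    intro q
    rw [← Quaternion.normSq_eq_norm_mul_self, ← Quaternion.normSq_eq_norm_mul_self,
      Quaternion.normSq_def', Quaternion.normSq_def']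
    simp
    ring
  have hnorm : ∀ c : ℂ, ‖ψ c‖ = ‖c‖ := by
    intro c
    have h1 : ‖(ψ c).im‖ = |c.im| := by
      rw [hψim, norm_smul, Real.norm_eq_abs, hunorm, mul_one]
    have h2 : ‖ψ c‖ * ‖ψ c‖ = ‖c‖ * ‖c‖ := by
      rw [hnormsq, hψre, h1, ← pow_two ‖c‖, ← Complex.normSq_eq_norm_sq, Complex.normSq_apply, abs_mul_abs_self]
    exact (mul_self_inj (norm_nonneg _) (norm_nonneg c)).1 h2
  set w : ℂ := ⟨lam.re, b⟩ with hwdef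
  have hwim : 0 < w.im := hb
  have hψw : ψ w = lam := by
    rw [hψdef, Complex.liftAux_apply]
    show algebraMap ℝ (Quaternion ℝ) lam.re + b • (b⁻¹ • lam.im) = lam
    rw [smul_smul, mul_inv_cancel₀ hb.ne', one_smul]
    show ((lam.re : ℝ) : Quaternion ℝ) + lam.im = lam
    exact lam.re_add_im
  have hfG : f = (g.map (algebraMap ℝ ℂ)).map (ψ.toRingHom) := by
    rw [hf, Polynomial.map_map]
    congr 1
    exact (RingHom.ext fun x => (ψ.commutes x).symm)
  have heval : ∀ c : ℂ, f.eval (ψ c) = ψ ((g.map (algebraMap ℝ ℂ)).eval c) := by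
    intro c
    rw [hfG, eval_map]
    exact eval₂_at_apply ψ.toRingHom c
  have hderivG : ((g.map (algebraMap ℝ ℂ)).derivative).eval w = 0 := by
    apply RingHom.injective ψ.toRingHom
    rw [map_zero]
    have h1 : derivative f = (derivative (g.map (algebraMap ℝ ℂ))).map ψ.toRingHom := by
      rw [hfG, derivative_map]
    have h2 : eval lam (derivative f)
        = ψ.toRingHom (eval w (derivative (g.map (algebraMap ℝ ℂ)))) := by
      rw [h1, ← hψw, eval_map]
      exact eval₂_at_apply ψ.toRingHom w
    rw [← h2]
    exact hcrit
  obtain ⟨r, hr0, hrim, hrle⟩ := complex_jensen g hg w hwim hderivG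
  have hzim : (ψ r).im = r.im • u := hψim r
  have hzimnorm : ‖(ψ r).im‖ = |r.im| := by
    rw [hzim, norm_smul, Real.norm_eq_abs, hunorm, mul_one]
  refine ⟨ψ r, ?_, ?_, ?_⟩
  · rw [heval r, hr0, map_zero]
  · rw [hzim]
    exact smul_ne_zero hrim hune
  · have hre : ((((ψ r).re : ℝ)) : Quaternion ℝ) = ψ ((r.re : ℝ) : ℂ) := by
      rw [hψre]
      have h := ψ.commutes r.re
      rw [Complex.coe_algebraMap] at h
      rw [h]
      exact (congrFun Quaternion.algebraMap_def r.re).symm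
    rw [hre, ← hψw, ← map_sub, hnorm, hzimnorm]
    exact hrle
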